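/- Let μ ∈ ℝᵖ and let μ̂₁,...,μ̂ᴷ ∈ ℝᵖ. Suppose strictly more than K/2 of the μ̂ⱼ, say those with index j ∈ J with |J| = ⌈(1-α)K⌉ for some α < 1/2, satisfy ‖μ̂ⱼ - μ‖₂ ≤ ε. Then the geometric median m of μ̂₁,...,μ̂ᴷ satisfies ‖m - μ‖₂ ≤ C_α ε with C_α = (1-α)/√(1-2α). -/

import Mathlib

open scoped RealInnerProductSpace

set_option maxHeartbeats 1000000


/-- Deterministic core of Minsker's aggregation lemma: if a `(1-α)`-majority of the points
`μ̂₁,...,μ̂ᴷ` (with `α < 1/2`) lies within distance `ε` of `μ`, then the geometric median `m`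
satisfies `‖m - μ‖₂ ≤ C_α ε` with `C_α = (1-α)/√(1-2α)`. -/
theorem geometric_median_aggregation_deterministic
    {p K : ℕ} (hK : 0 < K) (μhat : Fin K → EuclideanSpace ℝ (Fin p))
    (μ : EuclideanSpace ℝ (Fin p)) (α ε : ℝ) (hα0 : 0 ≤ α) (hα : α < 1 / 2)
    (J : Finset (Fin K)) (hJcard : J.card = ⌈(1 - α) * (K : ℝ)⌉₊)
    (hJ : ∀ j ∈ J, ‖μhat j - μ‖ ≤ ε)
    (m : EuclideanSpace ℝ (Fin p))
    (hmin : IsMinOn (fun z : EuclideanSpace ℝ (Fin p) => ∑ j, ‖μhat j - z‖) Set.univ m) :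
    ‖m - μ‖ ≤ (1 - α) / Real.sqrt (1 - 2 * α) * ε := by
  by_contra hcon
  push_neg at hcon
  have h2α : 0 < 1 - 2 * α := by linarith
  have hsq : 0 < Real.sqrt (1 - 2 * α) := Real.sqrt_pos.mpr h2α
  have hsq1 : Real.sqrt (1 - 2 * α) ≤ 1 - α := by
    have h1 : (1 : ℝ) - 2 * α ≤ (1 - α) ^ 2 := by nlinarith [sq_nonneg α]
    calc Real.sqrt (1 - 2 * α) ≤ Real.sqrt ((1 - α) ^ 2) := Real.sqrt_le_sqrt h1
      _ = 1 - α := Real.sqrt_sq (by linarith)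
  have hCα1 : (1 : ℝ) ≤ (1 - α) / Real.sqrt (1 - 2 * α) := by
    rw [le_div_iff₀ hsq]
    linarith
  have hJne : J.Nonempty := by
    rw [← Finset.card_pos, hJcard]
    refine Nat.ceil_pos.mpr (mul_pos (by linarith) ?_)
    exact_mod_cast hK
  have hε0 : 0 ≤ ε := by
    obtain ⟨j0, hj0⟩ := hJne
    exact le_trans (norm_nonneg _) (hJ j0 hj0)
  have hCε : 0 ≤ (1 - α) / Real.sqrt (1 - 2 * α) * ε :=
    mul_nonneg (div_nonneg (by linarith) hsq.le) hε0
  set R := ‖m - μ‖ with hRdef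
  have hR0 : 0 < R := lt_of_le_of_lt hCε hcon
  have hεR : ε < R := by
    have := mul_le_mul_of_nonneg_right hCα1 hε0
    simpa using lt_of_le_of_lt (by linarith : ε ≤ (1 - α) / Real.sqrt (1 - 2 * α) * ε) hcon
  have hD : 0 < R - ε := by linarith
  set D := R - ε with hDdef
  have hrε2 : (0 : ℝ) ≤ R ^ 2 - ε ^ 2 := by nlinarith
  set s := Real.sqrt (R ^ 2 - ε ^ 2) / R with hsdef
  have hs0 : 0 ≤ s := div_nonneg (Real.sqrt_nonneg _) hR0.le
  have hsqrt2 : Real.sqrt (R ^ 2 - ε ^ 2) ^ 2 = R ^ 2 - ε ^ 2 := Real.sq_sqrt hrε2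
  set u : EuclideanSpace ℝ (Fin p) := R⁻¹ • (μ - m) with hudef
  have hmμ : ‖μ - m‖ = R := by rw [hRdef, norm_sub_rev]
  have hRu : R • u = μ - m := by
    rw [hudef, smul_smul, mul_inv_cancel₀ hR0.ne', one_smul]
  have hu : ‖u‖ = 1 := by
    rw [hudef, norm_smul, hmμ, norm_inv, Real.norm_eq_abs, abs_of_pos hR0,
      inv_mul_cancel₀ hR0.ne']
  -- distance from each good point to m is at least D
  have hnD : ∀ j ∈ J, D ≤ ‖μhat j - m‖ := by
    intro j hj
    have h1 : ‖μ - m‖ ≤ ‖μ - μhat j‖ + ‖μhat j - m‖ := by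
      simpa using norm_sub_le_norm_sub_add_norm_sub μ (μhat j) m
    have h2 : ‖μ - μhat j‖ ≤ ε := by rw [norm_sub_rev]; exact hJ j hj
    rw [hmμ] at h1
    rw [hDdef]; linarith
  -- key cosine inequality for good points
  have key : ∀ j ∈ J, ‖μhat j - m‖ * s ≤ ⟪μhat j - m, u⟫ := by
    intro j hj
    set a := μhat j - m with hadef
    set n := ‖a‖ with hndef
    have hn0 : 0 < n := lt_of_lt_of_le hD (hnD j hj)
    have hεj : ‖a - R • u‖ ≤ ε := by
      rw [hRu, hadef, sub_sub_sub_cancel_right]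
      exact hJ j hj
    have hsqd : ‖a - R • u‖ ^ 2 = n ^ 2 - 2 * (R * ⟪a, u⟫) + R ^ 2 := by
      rw [norm_sub_sq_real, real_inner_smul_right, norm_smul, Real.norm_eq_abs,
        abs_of_pos hR0, hu]
      ring
    have h1 : n ^ 2 - 2 * (R * ⟪a, u⟫) + R ^ 2 ≤ ε ^ 2 := by
      nlinarith [norm_nonneg (a - R • u), hεj, hsqd]
    have amgm : 2 * n * Real.sqrt (R ^ 2 - ε ^ 2) ≤ n ^ 2 + (R ^ 2 - ε ^ 2) := by
      nlinarith [sq_nonneg (n - Real.sqrt (R ^ 2 - ε ^ 2))]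
    have h2 : n * Real.sqrt (R ^ 2 - ε ^ 2) ≤ R * ⟪a, u⟫ := by linarith
    have h3 : n * Real.sqrt (R ^ 2 - ε ^ 2) / R ≤ ⟪a, u⟫ := by
      rw [div_le_iff₀ hR0]
      linarith [h2]
    calc n * s = n * Real.sqrt (R ^ 2 - ε ^ 2) / R := by rw [hsdef]; ring
      _ ≤ ⟪a, u⟫ := h3
  -- per-point upper bound for good points
  have hgood : ∀ j ∈ J, ∀ t : ℝ, 0 < t →
      ‖μhat j - (m + t • u)‖ ≤ ‖μhat j - m‖ - t * s + t ^ 2 / (2 * D) := by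
    intro j hj t ht
    set a := μhat j - m with hadef
    set n := ‖a‖ with hndef
    have hn0 : 0 < n := lt_of_lt_of_le hD (hnD j hj)
    set c := ⟪a, u⟫ with hcdef
    have hsqd : ‖a - t • u‖ ^ 2 = n ^ 2 + (t ^ 2 - 2 * t * c) := by
      rw [norm_sub_sq_real, real_inner_smul_right, norm_smul, Real.norm_eq_abs,
        abs_of_pos ht, hu]
      ring
    have hmid : ‖a - t • u‖ ≤ n + (t ^ 2 - 2 * t * c) / (2 * n) := by
      have hnn : 0 ≤ n + (t ^ 2 - 2 * t * c) / (2 * n) := by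
        have : n + (t ^ 2 - 2 * t * c) / (2 * n) = (n ^ 2 + ‖a - t • u‖ ^ 2) / (2 * n) := by
          rw [hsqd]; field_simp; ring
        rw [this]
        positivity
      have hsqle : ‖a - t • u‖ ^ 2 ≤ (n + (t ^ 2 - 2 * t * c) / (2 * n)) ^ 2 := by
        have hexp : (n + (t ^ 2 - 2 * t * c) / (2 * n)) ^ 2 =
            n ^ 2 + (t ^ 2 - 2 * t * c) + ((t ^ 2 - 2 * t * c) / (2 * n)) ^ 2 := by
          field_simp
          ring
        rw [hexp, hsqd]
        nlinarith [sq_nonneg ((t ^ 2 - 2 * t * c) / (2 * n))]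
      calc ‖a - t • u‖ = Real.sqrt (‖a - t • u‖ ^ 2) := (Real.sqrt_sq (norm_nonneg _)).symm
        _ ≤ Real.sqrt ((n + (t ^ 2 - 2 * t * c) / (2 * n)) ^ 2) := Real.sqrt_le_sqrt hsqle
        _ = n + (t ^ 2 - 2 * t * c) / (2 * n) := Real.sqrt_sq hnn
    have hkey : n * s ≤ c := key j hj
    have haeq : μhat j - (m + t • u) = a - t • u := by
      rw [hadef]; abel
    rw [haeq]
    have hterm1 : n + (t ^ 2 - 2 * t * c) / (2 * n) = n - t * (c / n) + t ^ 2 / (2 * n) := by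
      field_simp; ring
    have hc : t * s ≤ t * (c / n) := by
      have : s ≤ c / n := by rw [le_div_iff₀ hn0]; linarith [hkey]
      exact mul_le_mul_of_nonneg_left this ht.le
    have hDn : t ^ 2 / (2 * n) ≤ t ^ 2 / (2 * D) := by
      apply div_le_div_of_nonneg_left (sq_nonneg t) (by linarith) (by linarith [hnD j hj])
    calc ‖a - t • u‖ ≤ n + (t ^ 2 - 2 * t * c) / (2 * n) := hmid
      _ = n - t * (c / n) + t ^ 2 / (2 * n) := hterm1
      _ ≤ n - t * s + t ^ 2 / (2 * D) := by linarith
  -- per-point bound for all points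
  have hbad : ∀ j : Fin K, ∀ t : ℝ, 0 < t →
      ‖μhat j - (m + t • u)‖ ≤ ‖μhat j - m‖ + t := by
    intro j t ht
    have : μhat j - (m + t • u) = (μhat j - m) - t • u := by abel
    rw [this]
    calc ‖μhat j - m - t • u‖ ≤ ‖μhat j - m‖ + ‖t • u‖ := norm_sub_le _ _
      _ = ‖μhat j - m‖ + t := by rw [norm_smul, hu, Real.norm_eq_abs, abs_of_pos ht, mul_one]
  -- summation inequality
  have hsum : ∀ t : ℝ, 0 < t →
      (J.card : ℝ) * (t * s) ≤ (J.card : ℝ) * (t ^ 2 / (2 * D)) + (Jᶜ.card : ℝ) * t := by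
    intro t ht
    have hmin' : ∑ j, ‖μhat j - m‖ ≤ ∑ j, ‖μhat j - (m + t • u)‖ :=
      isMinOn_iff.mp hmin (m + t • u) (Set.mem_univ _)
    have hsplit : ∀ g : Fin K → ℝ, ∑ j ∈ J, g j + ∑ j ∈ Jᶜ, g j = ∑ j, g j := by
      intro g; exact Finset.sum_add_sum_compl J g
    have hJsum : ∑ j ∈ J, ‖μhat j - (m + t • u)‖ ≤
        ∑ j ∈ J, ‖μhat j - m‖ - (J.card : ℝ) * (t * s) + (J.card : ℝ) * (t ^ 2 / (2 * D)) := by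
      have := Finset.sum_le_sum (fun j hj => hgood j hj t ht)
      calc ∑ j ∈ J, ‖μhat j - (m + t • u)‖
          ≤ ∑ j ∈ J, (‖μhat j - m‖ - t * s + t ^ 2 / (2 * D)) := this
        _ = ∑ j ∈ J, ‖μhat j - m‖ - (J.card : ℝ) * (t * s) + (J.card : ℝ) * (t ^ 2 / (2 * D)) := by
            rw [Finset.sum_add_distrib, Finset.sum_sub_distrib, Finset.sum_const,
              Finset.sum_const, nsmul_eq_mul, nsmul_eq_mul]
    have hJcsum : ∑ j ∈ Jᶜ, ‖μhat j - (m + t • u)‖ ≤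
        ∑ j ∈ Jᶜ, ‖μhat j - m‖ + (Jᶜ.card : ℝ) * t := by
      have := Finset.sum_le_sum (fun j (_ : j ∈ Jᶜ) => hbad j t ht)
      calc ∑ j ∈ Jᶜ, ‖μhat j - (m + t • u)‖
          ≤ ∑ j ∈ Jᶜ, (‖μhat j - m‖ + t) := this
        _ = ∑ j ∈ Jᶜ, ‖μhat j - m‖ + (Jᶜ.card : ℝ) * t := by
            rw [Finset.sum_add_distrib, Finset.sum_const, nsmul_eq_mul]
    have e1 := hsplit (fun j => ‖μhat j - m‖)
    have e2 := hsplit (fun j => ‖μhat j - (m + t • u)‖)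
    linarith [hmin', hJsum, hJcsum]
  -- take t → 0
  have hlim : (J.card : ℝ) * s ≤ (Jᶜ.card : ℝ) := by
    apply le_of_forall_pos_le_add
    intro δ hδ
    have hKpos : (0 : ℝ) < K := by exact_mod_cast hK
    set t := 2 * D * δ / K with htdef
    have ht : 0 < t := by positivity
    have := hsum t ht
    have hJK : (J.card : ℝ) ≤ K := by
      exact_mod_cast Finset.card_le_card (Finset.subset_univ J) |>.trans_eq
        (by simp [Fintype.card_fin])
    have hterm : (J.card : ℝ) * (t ^ 2 / (2 * D)) ≤ δ * t := by
      have h1 : t ^ 2 / (2 * D) = t * (δ / K) := by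
        rw [htdef]; field_simp
      rw [h1]
      have : (J.card : ℝ) * (t * (δ / K)) = t * δ * ((J.card : ℝ) / K) := by ring
      rw [this]
      have hfrac : (J.card : ℝ) / K ≤ 1 := by
        rw [div_le_one hKpos]; exact hJK
      have := mul_le_mul_of_nonneg_left hfrac (le_of_lt (mul_pos ht hδ))
      nlinarith [this]
    have hmain : (J.card : ℝ) * (t * s) ≤ δ * t + (Jᶜ.card : ℝ) * t := by linarith
    have : (J.card : ℝ) * s * t ≤ ((Jᶜ.card : ℝ) + δ) * t := by nlinarith
    exact le_of_mul_le_mul_right (by linarith [this]) ht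
  -- cardinality arithmetic
  have hcards : (J.card : ℝ) + (Jᶜ.card : ℝ) = K := by
    have := Finset.card_add_card_compl J
    rw [Fintype.card_fin] at this
    exact_mod_cast this
  have hJge : (1 - α) * K ≤ (J.card : ℝ) := by
    rw [hJcard]; exact Nat.le_ceil _
  have hKpos : (0 : ℝ) < K := by exact_mod_cast hK
  -- (1-α) * s ≤ α
  have hαs : (1 - α) * s ≤ α := by
    have h1 : (1 - α) * K * s ≤ (J.card : ℝ) * s :=
      mul_le_mul_of_nonneg_right hJge hs0
    have h2 : (Jᶜ.card : ℝ) ≤ α * K := by linarith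
    have : (1 - α) * K * s ≤ α * K := by linarith
    nlinarith
  -- final contradiction
  have hssqrt : (1 - α) * Real.sqrt (R ^ 2 - ε ^ 2) ≤ α * R := by
    have : (1 - α) * (Real.sqrt (R ^ 2 - ε ^ 2) / R) ≤ α := hαs
    calc (1 - α) * Real.sqrt (R ^ 2 - ε ^ 2)
        = (1 - α) * (Real.sqrt (R ^ 2 - ε ^ 2) / R) * R := by field_simp
      _ ≤ α * R := mul_le_mul_of_nonneg_right this hR0.le
  have hsqbound : (1 - 2 * α) * R ^ 2 ≤ (1 - α) ^ 2 * ε ^ 2 := by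
    have hlhs : 0 ≤ (1 - α) * Real.sqrt (R ^ 2 - ε ^ 2) :=
      mul_nonneg (by linarith) (Real.sqrt_nonneg _)
    nlinarith [hssqrt, hsqrt2]
  -- from hcon : (1-α)/√(1-2α) * ε < R
  have hcon2 : (1 - α) * ε < R * Real.sqrt (1 - 2 * α) := by
    have := mul_lt_mul_of_pos_right hcon hsq
    calc (1 - α) * ε = (1 - α) / Real.sqrt (1 - 2 * α) * ε * Real.sqrt (1 - 2 * α) := by
          rw [div_mul_eq_mul_div, div_mul_cancel₀ _ hsq.ne']
      _ < R * Real.sqrt (1 - 2 * α) := this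
  have hsqrt12 : Real.sqrt (1 - 2 * α) ^ 2 = 1 - 2 * α := Real.sq_sqrt h2α.le
  nlinarith [hcon2, hsqbound, mul_nonneg (show (0:ℝ) ≤ 1 - α by linarith) hε0,
    mul_pos hR0 hsq]
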